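/- arXiv:2412.20627 — 4 statements merged into one kernel-verified Lean document; each statement's English description precedes it below -/
import Mathlib

section
/- Let D ⊆ ℝ² be a nonempty open convex set and let P : D → ℝ be real-analytic such that the Hessian ∇²P(z) is positive definite for every z ∈ D (in particular P is strictly convex on D). Let x ∈ ℝ² with x ≠ 0, let 0 < a < b, and let z : (a, b) → D be a differentiable map satisfying ∇P(z(t)) = x/t for all t ∈ (a, b). Define h(t) = t·P(z(t)) − ⟨x, z(t)⟩. Then h is twice differentiable on (a, b) with h''(t) = −(1/t³)·⟨x, (∇²P(z(t)))⁻¹ x⟩ < 0 for every t ∈ (a, b); in particular h is strictly concave on (a, b). -/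
open InnerProductSpace

noncomputable section
abbrev E2 := EuclideanSpace ℝ (Fin 2)

theorem grad_inner (P : E2 → ℝ) (y v : E2) :
    (inner ℝ (gradient P y) v : ℝ) = fderiv ℝ P y v := by
  rw [gradient, ← toDual_apply_apply]; simp

theorem hess_inner (P : E2 → ℝ) (y v w : E2) :
    (inner ℝ (fderiv ℝ (gradient P) y v) w : ℝ) = iteratedFDeriv ℝ 2 P y ![v, w] := by
  rw [iteratedFDeriv_two_apply,
    show gradient P = (⇑(toDual ℝ E2).symm ∘ fderiv ℝ P) from rfl,
    LinearIsometryEquiv.comp_fderiv]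
  simp [← toDual_apply_apply]

theorem inv_pack (H : E2 →L[ℝ] E2) (pos : ∀ v : E2, v ≠ 0 → 0 < (inner ℝ (H v) v : ℝ)) :
    ∃ e : E2 ≃L[ℝ] E2, (⇑e = ⇑H) ∧ H.inverse = ↑e.symm := by
  have inj : Function.Injective H := by
    intro u v huv
    by_contra hne
    have h0 : u - v ≠ 0 := sub_ne_zero.mpr hne
    have := pos (u - v) h0
    rw [map_sub, huv, sub_self] at this
    simp at this
  have bij : Function.Bijective (H : E2 →ₗ[ℝ] E2) :=
    ⟨inj, (LinearMap.injective_iff_surjective).mp inj⟩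
  let e := (LinearEquiv.ofBijective (H : E2 →ₗ[ℝ] E2) bij).toContinuousLinearEquiv
  have he : ⇑e = ⇑H := rfl
  have hcoe : (e : E2 →L[ℝ] E2) = H := by ext v; rfl
  refine ⟨e, he, ?_⟩
  rw [← hcoe, ContinuousLinearMap.inverse_equiv]


/-- **Second derivative identity and concavity of Lemma 2.9.**  Let `P` be
real-analytic with positive definite Hessian on a nonempty open convex `D ⊆ ℝ²`,
let `x ∈ ℝ²` be nonzero, `0 < a < b`, and `z : (a,b) → D` differentiable with
`∇P(z(t)) = x/t`.  Then `h(t) = t·P(z(t)) − ⟨x, z(t)⟩` is twice differentiable on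
`(a,b)` with `h''(t) = −(1/t³)·⟨x, (∇²P(z(t)))⁻¹ x⟩ < 0`; in particular `h` is
strictly concave on `(a,b)`. -/
theorem stmt_7 (D : Set (EuclideanSpace ℝ (Fin 2)))
    (hne : D.Nonempty) (hopen : IsOpen D) (hconv : Convex ℝ D)
    (P : EuclideanSpace ℝ (Fin 2) → ℝ) (hP : AnalyticOnNhd ℝ P D)
    (hHess : ∀ z ∈ D, ∀ v : EuclideanSpace ℝ (Fin 2), v ≠ 0 →
      0 < iteratedFDeriv ℝ 2 P z ![v, v])
    (x : EuclideanSpace ℝ (Fin 2)) (hx : x ≠ 0)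
    (a b : ℝ) (ha : 0 < a) (hab : a < b)
    (z : ℝ → EuclideanSpace ℝ (Fin 2))
    (hzD : ∀ t ∈ Set.Ioo a b, z t ∈ D)
    (hzdiff : ∀ t ∈ Set.Ioo a b, DifferentiableAt ℝ z t)
    (hgrad : ∀ t ∈ Set.Ioo a b, gradient P (z t) = t⁻¹ • x) :
    (∀ t ∈ Set.Ioo a b,
      DifferentiableAt ℝ (fun s => s * P (z s) - (inner ℝ x (z s) : ℝ)) t) ∧
    (∀ t ∈ Set.Ioo a b,
      HasDerivAt (deriv (fun s => s * P (z s) - (inner ℝ x (z s) : ℝ)))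
        (-(1 / t ^ 3) *
          (inner ℝ x ((fderiv ℝ (gradient P) (z t)).inverse x) : ℝ)) t ∧
      -(1 / t ^ 3) * (inner ℝ x ((fderiv ℝ (gradient P) (z t)).inverse x) : ℝ) < 0) ∧
    StrictConcaveOn ℝ (Set.Ioo a b)
      (fun s => s * P (z s) - (inner ℝ x (z s) : ℝ)) := by
  set h : ℝ → ℝ := fun s => s * P (z s) - (inner ℝ x (z s) : ℝ) with hh
  -- positivity of t
  have htpos : ∀ t ∈ Set.Ioo a b, (0:ℝ) < t := fun t ht => ha.trans ht.1
  -- basic smoothness facts at points of the curve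
  have hPz : ∀ t ∈ Set.Ioo a b, HasDerivAt (fun s => P (z s))
      (t⁻¹ * (inner ℝ x (deriv z t) : ℝ)) t := by
    intro t ht
    have hc : ContDiffAt ℝ 2 P (z t) := (hP (z t) (hzD t ht)).contDiffAt.of_le le_top
    have hz' := (hzdiff t ht).hasDerivAt
    have hcomp := (hc.differentiableAt two_ne_zero).hasFDerivAt.comp_hasDerivAt t hz'
    have hv : fderiv ℝ P (z t) (deriv z t) = t⁻¹ * (inner ℝ x (deriv z t) : ℝ) := by
      rw [← grad_inner, hgrad t ht, real_inner_smul_left]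
    rwa [hv] at hcomp
  have hinner : ∀ t ∈ Set.Ioo a b, HasDerivAt (fun s => (inner ℝ x (z s) : ℝ))
      (inner ℝ x (deriv z t) : ℝ) t := by
    intro t ht
    have := (innerSL ℝ x).hasFDerivAt.comp_hasDerivAt t (hzdiff t ht).hasDerivAt
    simp at this; exact this
  -- h' = P ∘ z
  have key : ∀ t ∈ Set.Ioo a b, HasDerivAt h (P (z t)) t := by
    intro t ht
    have tne : t ≠ 0 := (htpos t ht).ne'
    have h1 := (hasDerivAt_id t).mul (hPz t ht)
    have := h1.sub (hinner t ht)
    have hval : 1 * P (z t) + t * (t⁻¹ * (inner ℝ x (deriv z t) : ℝ)) -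
        (inner ℝ x (deriv z t) : ℝ) = P (z t) := by
      field_simp
      ring
    simp only [id_eq] at this
    rwa [hval] at this
  have part1 : ∀ t ∈ Set.Ioo a b, DifferentiableAt ℝ h t :=
    fun t ht => (key t ht).differentiableAt
  -- deriv h = P ∘ z near any point
  have hderiv_eq : ∀ t ∈ Set.Ioo a b, deriv h =ᶠ[nhds t] fun s => P (z s) := by
    intro t ht
    filter_upwards [isOpen_Ioo.mem_nhds ht] with s hs
    exact (key s hs).deriv
  -- second derivative
  have part2 : ∀ t ∈ Set.Ioo a b,
      HasDerivAt (deriv h)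
        (-(1 / t ^ 3) * (inner ℝ x ((fderiv ℝ (gradient P) (z t)).inverse x) : ℝ)) t ∧
      -(1 / t ^ 3) * (inner ℝ x ((fderiv ℝ (gradient P) (z t)).inverse x) : ℝ) < 0 := by
    intro t ht
    have tpos := htpos t ht
    have tne : t ≠ 0 := tpos.ne'
    set y := z t with hy
    set H := fderiv ℝ (gradient P) y with hH
    -- positive definiteness of H
    have pos : ∀ v : E2, v ≠ 0 → 0 < (inner ℝ (H v) v : ℝ) := by
      intro v hv
      rw [hH, hess_inner]
      exact hHess y (hzD t ht) v hv
    obtain ⟨e, he, hinv⟩ := inv_pack H pos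
    -- gradient P is differentiable at y with derivative H
    have hc : ContDiffAt ℝ 3 P y := (hP y (hzD t ht)).contDiffAt.of_le le_top
    have hfd : DifferentiableAt ℝ (fderiv ℝ P) y := by
      have : ContDiffAt ℝ 2 (fderiv ℝ P) y := hc.fderiv_right (by norm_num)
      exact this.differentiableAt two_ne_zero
    have hgd : DifferentiableAt ℝ (gradient P) y :=
      ((toDual ℝ E2).symm.toContinuousLinearMap.differentiable.differentiableAt).comp y hfd
    have hHd : HasFDerivAt (gradient P) H y := hgd.hasFDerivAt
    -- H z' = -(t^2)⁻¹ • x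
    have hz' := (hzdiff t ht).hasDerivAt
    have hcomp : HasDerivAt (fun s => gradient P (z s)) (H (deriv z t)) t :=
      hHd.comp_hasDerivAt t hz'
    have heq : (fun s => gradient P (z s)) =ᶠ[nhds t] fun s : ℝ => s⁻¹ • x := by
      filter_upwards [isOpen_Ioo.mem_nhds ht] with s hs
      exact hgrad s hs
    have hrhs : HasDerivAt (fun s : ℝ => s⁻¹ • x) (-(t ^ 2)⁻¹ • x) t :=
      (hasDerivAt_inv tne).smul_const x
    have hHz' : H (deriv z t) = -(t ^ 2)⁻¹ • x := by
      have := hcomp.congr_of_eventuallyEq heq.symm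
      exact this.unique hrhs
    have hz'eq : deriv z t = -(t ^ 2)⁻¹ • e.symm x := by
      have h1 : e.symm (H (deriv z t)) = deriv z t := by
        rw [← congrFun he (deriv z t)]
        exact e.symm_apply_apply _
      rw [← h1, hHz', map_smul]
    -- value of the second derivative
    have hval : t⁻¹ * (inner ℝ x (deriv z t) : ℝ) =
        -(1 / t ^ 3) * (inner ℝ x (H.inverse x) : ℝ) := by
      rw [hz'eq, hinv]
      rw [real_inner_smul_right]
      have hcoe : (e.symm : E2 →L[ℝ] E2) x = e.symm x := rfl
      rw [hcoe, ← mul_assoc]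
      congr 1
      field_simp
    have hpos : 0 < (inner ℝ x (H.inverse x) : ℝ) := by
      rw [hinv]
      have hw : (e.symm : E2 →L[ℝ] E2) x = e.symm x := rfl
      rw [hw]
      have hwne : e.symm x ≠ 0 := by
        intro h0
        apply hx
        rw [← e.apply_symm_apply x, h0, map_zero]
      have hxw : x = H (e.symm x) := by
        rw [← congrFun he (e.symm x)]
        exact (e.apply_symm_apply x).symm
      have := pos (e.symm x) hwne
      rwa [← hxw] at this
    constructor
    · have := (hPz t ht).congr_of_eventuallyEq (hderiv_eq t ht)
      rwa [hval] at this
    · apply mul_neg_of_neg_of_pos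
      · have : (0:ℝ) < 1 / t ^ 3 := by positivity
        linarith
      · exact hpos
  refine ⟨part1, part2, ?_⟩
  -- strict concavity
  apply strictConcaveOn_of_deriv2_neg (convex_Ioo a b)
  · exact fun t ht => (part1 t ht).continuousAt.continuousWithinAt
  · intro t ht
    rw [interior_Ioo] at ht
    have := (part2 t ht).1.deriv
    simp only [Function.iterate_succ, Function.iterate_zero, Function.comp_apply, Function.id_def,
      Function.comp] at *
    rw [show deriv (deriv h) t = _ from this]
    exact (part2 t ht).2
end
end

section
/- Let D ⊆ ℝ² be a nonempty open convex set and let P : D → ℝ be real-analytic such that the Hessian ∇²P(z) is positive definite for every z ∈ D (in particular P is strictly convex on D). Let x ∈ ℝ² with x ≠ 0, let 0 < a < b, and let z : (a, b) → D be a differentiable map satisfying ∇P(z(t)) = x/t for all t ∈ (a, b). Define h(t) = t·P(z(t)) − ⟨x, z(t)⟩. If t₀ ∈ (a, b) satisfies P(z(t₀)) = 0, then h attains a strict global maximum on (a, b) at t₀, i.e. h(t) < h(t₀) for all t ∈ (a, b) with t ≠ t₀. -/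
noncomputable section

lemma strict_conv_aux {E : Type*} [NormedAddCommGroup E] [InnerProductSpace ℝ E]
    [CompleteSpace E]
    (D : Set E) (hopen : IsOpen D) (hconv : Convex ℝ D)
    (P : E → ℝ) (hP : AnalyticOnNhd ℝ P D)
    (hHess : ∀ z ∈ D, ∀ v : E, v ≠ 0 → 0 < iteratedFDeriv ℝ 2 P z ![v, v])
    (w y : E) (hw : w ∈ D) (hy : y ∈ D) (hne : w ≠ y) :
    P w + (inner ℝ (gradient P w) (y - w) : ℝ) < P y := by
  set v := y - w with hv
  have hv0 : v ≠ 0 := sub_ne_zero.2 (Ne.symm hne)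
  set γ : ℝ → E := fun s => w + s • v with hγdef
  have hγmem : ∀ s ∈ Set.Icc (0:ℝ) 1, γ s ∈ D := fun s hs =>
    hconv.add_smul_sub_mem hw hy hs
  set S : Set ℝ := γ ⁻¹' D with hS
  have hγcont : Continuous γ := by continuity
  have hSopen : IsOpen S := hopen.preimage hγcont
  have hIccS : Set.Icc (0:ℝ) 1 ⊆ S := fun s hs => hγmem s hs
  have hγ : ∀ s : ℝ, HasDerivAt γ v s := fun s => by
    simpa [hγdef] using ((hasDerivAt_id s).smul_const v).const_add w
  set F := fderiv ℝ P with hF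
  have hFan : AnalyticOnNhd ℝ F D := hP.fderiv
  set g : ℝ → ℝ := fun s => P (γ s) with hg
  set g₁ : ℝ → ℝ := fun s => F (γ s) v with hg₁
  have hgd : ∀ s ∈ S, HasDerivAt g (g₁ s) s := fun s hs =>
    ((hP (γ s) hs).differentiableAt.hasFDerivAt).comp_hasDerivAt s (hγ s)
  have hg₁d : ∀ s ∈ S, HasDerivAt g₁ (iteratedFDeriv ℝ 2 P (γ s) ![v, v]) s := by
    intro s hs
    have h1 : HasDerivAt (fun u => F (γ u)) (fderiv ℝ F (γ s) v) s :=
      ((hFan (γ s) hs).differentiableAt.hasFDerivAt).comp_hasDerivAt s (hγ s)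
    have h2 := (ContinuousLinearMap.apply ℝ ℝ v).hasFDerivAt.comp_hasDerivAt s h1
    have heq : iteratedFDeriv ℝ 2 P (γ s) ![v, v] = fderiv ℝ F (γ s) v v := by
      rw [iteratedFDeriv_two_apply]; simp [hF]
    rw [heq]
    exact h2
  have hmono : StrictMonoOn g₁ (Set.Icc 0 1) := by
    apply strictMonoOn_of_deriv_pos (convex_Icc 0 1)
    · exact fun s hs => ((hg₁d s (hIccS hs)).continuousAt).continuousWithinAt
    · intro s hs
      rw [interior_Icc] at hs
      have hsS : s ∈ S := hIccS (Set.Ioo_subset_Icc_self hs)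
      rw [(hg₁d s hsS).deriv]
      exact hHess (γ s) hsS v hv0
  obtain ⟨c, hc, hceq⟩ := exists_hasDerivAt_eq_slope g g₁ (by norm_num : (0:ℝ) < 1)
    (fun s hs => ((hgd s (hIccS hs)).continuousAt).continuousWithinAt)
    (fun s hs => hgd s (hIccS (Set.Ioo_subset_Icc_self hs)))
  have h01 : g₁ 0 < g₁ c :=
    hmono (Set.mem_Icc.2 ⟨le_refl 0, zero_le_one⟩)
      (Set.mem_Icc.2 ⟨hc.1.le, hc.2.le⟩) hc.1
  have hg0 : g 0 = P w := by simp [hg, hγdef]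
  have hg1' : g 1 = P y := by simp [hg, hγdef, hv]
  have hslope : g₁ c = P y - P w := by
    rw [hceq, hg0, hg1']; ring
  have hinner : (inner ℝ (gradient P w) v : ℝ) = g₁ 0 := by
    have : F w v = inner ℝ (gradient P w) v := by
      rw [gradient]
      rw [← InnerProductSpace.toDual_apply_apply, LinearIsometryEquiv.apply_symm_apply]
    simp only [hg₁, hγdef]
    rw [← this]
    norm_num
  rw [hinner]
  have := h01
  rw [hslope] at this
  linarith

/-- **Corollary 2.13 (4).**  Let `P` be real-analytic with positive definite
Hessian on a nonempty open convex `D ⊆ ℝ²`, let `x ∈ ℝ²` be nonzero,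
`0 < a < b`, and `z : (a,b) → D` differentiable with `∇P(z(t)) = x/t`.  Set
`h(t) = t·P(z(t)) − ⟨x, z(t)⟩`.  If `t₀ ∈ (a,b)` satisfies `P(z(t₀)) = 0`, then
`h` attains a strict global maximum on `(a,b)` at `t₀`. -/
theorem stmt_8 (D : Set (EuclideanSpace ℝ (Fin 2)))
    (hne : D.Nonempty) (hopen : IsOpen D) (hconv : Convex ℝ D)
    (P : EuclideanSpace ℝ (Fin 2) → ℝ) (hP : AnalyticOnNhd ℝ P D)
    (hHess : ∀ z ∈ D, ∀ v : EuclideanSpace ℝ (Fin 2), v ≠ 0 →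
      0 < iteratedFDeriv ℝ 2 P z ![v, v])
    (x : EuclideanSpace ℝ (Fin 2)) (hx : x ≠ 0)
    (a b : ℝ) (ha : 0 < a) (hab : a < b)
    (z : ℝ → EuclideanSpace ℝ (Fin 2))
    (hzD : ∀ t ∈ Set.Ioo a b, z t ∈ D)
    (hzdiff : ∀ t ∈ Set.Ioo a b, DifferentiableAt ℝ z t)
    (hgrad : ∀ t ∈ Set.Ioo a b, gradient P (z t) = t⁻¹ • x)
    (t₀ : ℝ) (ht₀ : t₀ ∈ Set.Ioo a b) (hP0 : P (z t₀) = 0) :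
    ∀ t ∈ Set.Ioo a b, t ≠ t₀ →
      t * P (z t) - (inner ℝ x (z t) : ℝ) <
        t₀ * P (z t₀) - (inner ℝ x (z t₀) : ℝ) := by
  intro t ht htne
  have ht0 : 0 < t := ha.trans ht.1
  have hzne : z t ≠ z t₀ := by
    intro heq
    have h1 : (t⁻¹ : ℝ) • x = t₀⁻¹ • x := by
      rw [← hgrad t ht, heq, hgrad t₀ ht₀]
    have h2 : (t : ℝ)⁻¹ = t₀⁻¹ := smul_left_injective ℝ hx h1
    exact htne (by
      have := inv_injective h2
      exact this)
  have key := strict_conv_aux D hopen hconv P hP hHess (z t) (z t₀)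
    (hzD t ht) (hzD t₀ ht₀) hzne
  rw [hgrad t ht] at key
  have hin : (inner ℝ ((t⁻¹ : ℝ) • x) (z t₀ - z t) : ℝ)
      = t⁻¹ * ((inner ℝ x (z t₀) : ℝ) - (inner ℝ x (z t) : ℝ)) := by
    rw [real_inner_smul_left, inner_sub_right]
  rw [hin, hP0] at key
  have hmul := (mul_lt_mul_iff_right₀ ht0).2 key
  have htinv : t * t⁻¹ = 1 := mul_inv_cancel₀ ht0.ne'
  rw [mul_add, ← mul_assoc, htinv, one_mul, mul_zero] at hmul
  rw [hP0]
  linarith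
end
end

section
/- Let I ⊆ ℝ be an open interval interval, let q : I → ℝ be twice differentiable with q''(s) > 0 and q'(s) < 0 for all s ∈ I, and let α, β > 0. Define F(s) = (s·q'(s) − q(s)) / (α·q'(s) − β). Then: (i) F is differentiable on I with F'(s) = q''(s)·(α·q(s) − β·s) / (α·q'(s) − β)² for all s ∈ I; and (ii) if s₀ ∈ I satisfies α·q(s₀) = β·s₀, then F(s) < F(s₀) for every s ∈ I with s ≠ s₀. -/
/-- **Optimization step in the proof of Theorem D.**  Let `I ⊆ ℝ` be an open
interval, `q : I → ℝ` twice differentiable with `q'' > 0` and `q' < 0` on `I`,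
and `α, β > 0`.  With `F(s) = (s·q'(s) − q(s))/(α·q'(s) − β)`:
(i) `F'(s) = q''(s)·(α·q(s) − β·s)/(α·q'(s) − β)²` on `I`; and
(ii) if `s₀ ∈ I` satisfies `α·q(s₀) = β·s₀`, then `F(s) < F(s₀)` for all
`s ∈ I`, `s ≠ s₀`. -/
theorem stmt_9 (I : Set ℝ) (hIopen : IsOpen I) (hIconn : I.OrdConnected)
    (q : ℝ → ℝ)
    (hq1 : ∀ s ∈ I, DifferentiableAt ℝ q s)
    (hq2 : ∀ s ∈ I, DifferentiableAt ℝ (deriv q) s)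
    (hq'' : ∀ s ∈ I, 0 < deriv (deriv q) s)
    (hq' : ∀ s ∈ I, deriv q s < 0)
    (α β : ℝ) (hα : 0 < α) (hβ : 0 < β) :
    (∀ s ∈ I,
      HasDerivAt (fun u => (u * deriv q u - q u) / (α * deriv q u - β))
        (deriv (deriv q) s * (α * q s - β * s) / (α * deriv q s - β) ^ 2) s) ∧
    (∀ s₀ ∈ I, α * q s₀ = β * s₀ → ∀ s ∈ I, s ≠ s₀ →
      (s * deriv q s - q s) / (α * deriv q s - β) <
        (s₀ * deriv q s₀ - q s₀) / (α * deriv q s₀ - β)) := by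
  have hden : ∀ s ∈ I, α * deriv q s - β < 0 := fun s hs => by
    nlinarith [hq' s hs]
  have hden' : ∀ s ∈ I, α * deriv q s - β ≠ 0 := fun s hs => ne_of_lt (hden s hs)
  have hF : ∀ s ∈ I,
      HasDerivAt (fun u => (u * deriv q u - q u) / (α * deriv q u - β))
        (deriv (deriv q) s * (α * q s - β * s) / (α * deriv q s - β) ^ 2) s := by
    intro s hs
    have h1 : HasDerivAt (fun u => u * deriv q u - q u) (s * deriv (deriv q) s) s := by
      have := ((hasDerivAt_id s).mul (hq2 s hs).hasDerivAt).sub (hq1 s hs).hasDerivAt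
      refine this.congr_deriv ?_
      simp only [one_mul, id_eq]
      ring
    have h2 : HasDerivAt (fun u => α * deriv q u - β) (α * deriv (deriv q) s) s := by
      exact ((hq2 s hs).hasDerivAt.const_mul α).sub_const β
    have h3 := h1.div h2 (hden' s hs)
    refine h3.congr_deriv ?_
    congr 1
    ring
  refine ⟨hF, ?_⟩
  intro s₀ hs₀ heq s hs hne
  have hconv : Convex ℝ I := hIconn.convex
  have hg : StrictAntiOn (fun u => α * q u - β * u) I := by
    apply strictAntiOn_of_deriv_neg hconv
    · exact fun x hx => (((hq1 x hx).const_mul α).sub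
        ((differentiableAt_id.const_mul β))).continuousAt.continuousWithinAt
    · intro x hx
      rw [hIopen.interior_eq] at hx
      have hd : HasDerivAt (fun u => α * q u - β * u) (α * deriv q x - β) x := by
        have := ((hq1 x hx).hasDerivAt.const_mul α).sub ((hasDerivAt_id x).const_mul β)
        exact this.congr_deriv (by ring)
      rw [hd.deriv]
      exact hden x hx
  set F := fun u => (u * deriv q u - q u) / (α * deriv q u - β) with hFdef
  have hcont : ∀ J ⊆ I, ContinuousOn F J := fun J hJ x hx =>
    (hF x (hJ hx)).differentiableAt.continuousAt.continuousWithinAt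
  rcases lt_or_gt_of_ne hne with h | h
  · -- s < s₀
    have hsub : Set.Icc s s₀ ⊆ I := hIconn.out hs hs₀
    have hmono : StrictMonoOn F (Set.Icc s s₀) := by
      apply strictMonoOn_of_deriv_pos (convex_Icc _ _) (hcont _ hsub)
      intro x hx
      rw [interior_Icc] at hx
      have hxI : x ∈ I := hsub ⟨le_of_lt hx.1, le_of_lt hx.2⟩
      rw [(hF x hxI).deriv]
      have hgx : 0 < α * q x - β * x := by
        have h2 : α * q s₀ - β * s₀ < α * q x - β * x := hg hxI hs₀ hx.2
        linarith
      have hsq : 0 < (α * deriv q x - β) ^ 2 := by nlinarith [hden x hxI]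
      exact div_pos (mul_pos (hq'' x hxI) hgx) hsq
    exact hmono (Set.left_mem_Icc.mpr (le_of_lt h)) (Set.right_mem_Icc.mpr (le_of_lt h)) h
  · -- s₀ < s
    have hsub : Set.Icc s₀ s ⊆ I := hIconn.out hs₀ hs
    have hanti : StrictAntiOn F (Set.Icc s₀ s) := by
      apply strictAntiOn_of_deriv_neg (convex_Icc _ _) (hcont _ hsub)
      intro x hx
      rw [interior_Icc] at hx
      have hxI : x ∈ I := hsub ⟨le_of_lt hx.1, le_of_lt hx.2⟩
      rw [(hF x hxI).deriv]
      have hgx : α * q x - β * x < 0 := by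
        have h2 : α * q x - β * x < α * q s₀ - β * s₀ := hg hs₀ hxI hx.1
        linarith
      have hsq : 0 < (α * deriv q x - β) ^ 2 := by nlinarith [hden x hxI]
      exact div_neg_of_neg_of_pos (by nlinarith [hq'' x hxI]) hsq
    exact hanti (Set.left_mem_Icc.mpr (le_of_lt h)) (Set.right_mem_Icc.mpr (le_of_lt h)) h
end

section
/- Let 𝒜 be a countable set and T : 𝒜 × 𝒜 → {0,1} a transition matrix, with one-sided countable state Markov shift Σ⁺ and left shift σ. Let f, g : Σ⁺ → ℝ be (A,β)-locally Hölder potentials, write S_n𝐟(x) = (S_n f(x), S_n g(x)), fix k ≥ 1, and for each k-cylinder p choose a non-periodic point z_p ∈ p. Set ε_k = A·e^{−βk}/(1 − e^{−β}). For an open rectangle U = (u₁,u₂)×(u₃,u₄) and ε > 0 write U_{+ε} = (u₁−ε, u₂+ε)×(u₃−ε, u₄+ε) and U_{−ε} = (u₁+ε, u₂−ε)×(u₃+ε, u₄−ε). Define the counts (in ℕ ∪ {∞}) M(n,U) = #{x ∈ Fixⁿ : S_n𝐟(x) ∈ U} and W(n,U) = Σ_{p ∈ Λ_k} #{y ∈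 p ∩ σ^{−n}(z_p) : S_n𝐟(y) ∈ U}, where Λ_k is the set of all k-cylinders. Then for every n ≥ k and every open rectangle U, W(n, U_{−ε_k}) ≤ M(n, U) ≤ W(n, U_{+ε_k}). -/
/-- The one-sided countable state Markov shift associated with the transition
matrix `T` (indexing sequences by `ℕ`, i.e. the `i`-th letter of the paper,
`1 ≤ i`, is `x (i-1)` here). -/
def shiftSpace {𝒜 : Type*} (T : 𝒜 → 𝒜 → Prop) : Set (ℕ → 𝒜) :=
  {x | ∀ n, T (x n) (x (n + 1))}

/-- The left shift map. -/
def shiftMap {𝒜 : Type*} : (ℕ → 𝒜) → ℕ → 𝒜 := fun x n => x (n + 1)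

/-- The `k`-cylinder determined by the word `a : Fin k → 𝒜`. -/
def cylinder {𝒜 : Type*} (T : 𝒜 → 𝒜 → Prop) (k : ℕ) (a : Fin k → 𝒜) : Set (ℕ → 𝒜) :=
  {x ∈ shiftSpace T | ∀ i : Fin k, x i.val = a i}

/-- `f` is `(A,β)`-locally Hölder: `|f(x) − f(y)| ≤ A e^{−βm}` whenever the first
`m ≥ 1` letters of `x` and `y` agree. -/
def LocallyHolder {𝒜 : Type*} (T : 𝒜 → 𝒜 → Prop) (A β : ℝ)
    (f : (ℕ → 𝒜) → ℝ) : Prop :=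
  ∀ m : ℕ, 1 ≤ m → ∀ x ∈ shiftSpace T, ∀ y ∈ shiftSpace T,
    (∀ i < m, x i = y i) → |f x - f y| ≤ A * Real.exp (-β * m)

/-- The `n`-th ergodic sum `S_n f(x) = Σ_{i=0}^{n−1} f(σⁱ x)`. -/
noncomputable def ergSum {𝒜 : Type*} (f : (ℕ → 𝒜) → ℝ) (n : ℕ) (x : ℕ → 𝒜) : ℝ :=
  ∑ i ∈ Finset.range n, f (shiftMap^[i] x)

/-- `M(n,U)`: the number (in `ℕ∞`) of `n`-periodic points `x` of the shift with
`(S_n f(x), S_n g(x))` in the open rectangle `(u₁,u₂) × (u₃,u₄)`. -/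
noncomputable def countM {𝒜 : Type*} (T : 𝒜 → 𝒜 → Prop)
    (f g : (ℕ → 𝒜) → ℝ) (n : ℕ) (u₁ u₂ u₃ u₄ : ℝ) : ℕ∞ :=
  {x ∈ shiftSpace T | shiftMap^[n] x = x ∧
    ergSum f n x ∈ Set.Ioo u₁ u₂ ∧ ergSum g n x ∈ Set.Ioo u₃ u₄}.encard

/-- `W(n,U)`: the sum over all `k`-cylinders `p` (equivalently, over all words
`a` of length `k`; empty cylinders contribute `0`) of the number of
`y ∈ p ∩ σ^{−n}(z_p)` with `(S_n f(y), S_n g(y))` in the open rectangle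
`(u₁,u₂) × (u₃,u₄)`. -/
noncomputable def countW {𝒜 : Type*} (T : 𝒜 → 𝒜 → Prop)
    (f g : (ℕ → 𝒜) → ℝ) (k : ℕ) (zp : (Fin k → 𝒜) → ℕ → 𝒜)
    (n : ℕ) (u₁ u₂ u₃ u₄ : ℝ) : ℕ∞ :=
  ∑' a : Fin k → 𝒜,
    {y ∈ cylinder T k a | shiftMap^[n] y = zp a ∧
      ergSum f n y ∈ Set.Ioo u₁ u₂ ∧ ergSum g n y ∈ Set.Ioo u₃ u₄}.encard

lemma shiftIter {𝒜 : Type*} (x : ℕ → 𝒜) (i j : ℕ) : (shiftMap^[i] x) j = x (j + i) := by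
  induction i generalizing x with
  | zero => rfl
  | succ i ih =>
    rw [Function.iterate_succ_apply, ih]
    show x (j + i + 1) = x (j + (i + 1))
    rw [Nat.add_assoc]

lemma shift_mem {𝒜 : Type*} {T : 𝒜 → 𝒜 → Prop} {x : ℕ → 𝒜} (hx : x ∈ shiftSpace T) (i : ℕ) :
    shiftMap^[i] x ∈ shiftSpace T := by
  intro j
  rw [shiftIter, shiftIter]
  have e : j + 1 + i = j + i + 1 := by omega
  rw [e]
  exact hx (j + i)

lemma periodic_mod {𝒜 : Type*} {x : ℕ → 𝒜} {n : ℕ} (hn : 1 ≤ n)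
    (hp : ∀ j, x (j + n) = x j) (j : ℕ) : x j = x (j % n) := by
  induction j using Nat.strong_induction_on with
  | _ j ih =>
    by_cases h : j < n
    · rw [Nat.mod_eq_of_lt h]
    · push_neg at h
      have h1 : j - n + n = j := by omega
      have h2 : x j = x (j - n) := by
        have h3 := hp (j - n)
        rwa [h1] at h3
      rw [h2, ih (j - n) (by omega), Nat.mod_eq_sub_mod h]

lemma ergSum_bound {𝒜 : Type*} {T : 𝒜 → 𝒜 → Prop} {f : (ℕ → 𝒜) → ℝ} {A β : ℝ}
    (hA : 0 < A) (hβ : 0 < β) (hf : LocallyHolder T A β f) (k n : ℕ) (hk : 1 ≤ k)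
    {x y : ℕ → 𝒜} (hx : x ∈ shiftSpace T) (hy : y ∈ shiftSpace T)
    (hagree : ∀ i < n + k, x i = y i) :
    |ergSum f n x - ergSum f n y| ≤ A * Real.exp (-β * k) / (1 - Real.exp (-β)) := by
  have hr0 : (0:ℝ) < Real.exp (-β) := Real.exp_pos _
  have hr1 : Real.exp (-β) < 1 := by rw [Real.exp_lt_one_iff]; linarith
  set r : ℝ := Real.exp (-β) with hr
  have key : ∀ m : ℕ, Real.exp (-β * m) = r ^ m := fun m => by
    rw [show -β * (m:ℝ) = (m:ℝ) * (-β) by ring, Real.exp_nat_mul]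
  have hgeo : ∑ i ∈ Finset.range n, r ^ i ≤ (1 - r)⁻¹ := by
    have h := Summable.sum_le_tsum (Finset.range n) (fun i _ => le_of_lt (pow_pos hr0 i))
      (summable_geometric_of_lt_one hr0.le hr1)
    rwa [tsum_geometric_of_lt_one hr0.le hr1] at h
  have step1 : |ergSum f n x - ergSum f n y|
      ≤ ∑ i ∈ Finset.range n, A * r ^ (n + k - i) := by
    rw [ergSum, ergSum, ← Finset.sum_sub_distrib]
    refine (Finset.abs_sum_le_sum_abs _ _).trans (Finset.sum_le_sum fun i hi => ?_)
    have hi' : i < n := Finset.mem_range.mp hi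
    have h := hf (n + k - i) (by omega) _ (shift_mem hx i) _ (shift_mem hy i)
      (fun j hj => by rw [shiftIter, shiftIter]; exact hagree (j + i) (by omega))
    rwa [key] at h
  refine step1.trans ?_
  have step2 : ∑ i ∈ Finset.range n, A * r ^ (n + k - i)
      = A * r ^ k * ∑ i ∈ Finset.range n, r ^ (n - i) := by
    rw [Finset.mul_sum]
    refine Finset.sum_congr rfl fun i hi => ?_
    have hi' : i < n := Finset.mem_range.mp hi
    rw [show n + k - i = k + (n - i) by omega, pow_add]
    ring
  have step3 : ∑ i ∈ Finset.range n, r ^ (n - i) = ∑ i ∈ Finset.range n, r ^ (i + 1) := by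
    rw [← Finset.sum_range_reflect (fun j => r ^ (j + 1)) n]
    refine Finset.sum_congr rfl fun i hi => ?_
    have hi' : i < n := Finset.mem_range.mp hi
    congr 1
    omega
  have step4 : ∑ i ∈ Finset.range n, r ^ (i + 1) ≤ (1 - r)⁻¹ := by
    have h1 : ∑ i ∈ Finset.range n, r ^ (i + 1) ≤ ∑ i ∈ Finset.range n, r ^ i :=
      Finset.sum_le_sum fun i _ => pow_le_pow_of_le_one hr0.le hr1.le (by omega)
    exact h1.trans hgeo
  rw [step2, step3, div_eq_mul_inv, key k]
  have hposc : 0 < A * r ^ k := by positivity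
  exact mul_le_mul_of_nonneg_left step4 hposc.le

lemma enat_hasSum {ι : Type*} (f : ι → ℕ∞) :
    HasSum f (⨆ s : Finset ι, ∑ i ∈ s, f i) :=
  hasSum_of_isLUB (f := f) (⨆ s : Finset ι, ∑ i ∈ s, f i)
    (isLUB_iSup (f := fun s : Finset ι => ∑ i ∈ s, f i))

lemma enat_summable {ι : Type*} (f : ι → ℕ∞) : Summable f := ⟨_, enat_hasSum f⟩

lemma enat_tsum_eq {ι : Type*} (f : ι → ℕ∞) :
    ∑' i, f i = ⨆ s : Finset ι, ∑ i ∈ s, f i := (enat_hasSum f).tsum_eq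

lemma encard_finset_biUnion {ι α : Type*} (t : Finset ι) (s : ι → Set α)
    (hd : ∀ i ∈ t, ∀ j ∈ t, i ≠ j → Disjoint (s i) (s j)) :
    ∑ i ∈ t, (s i).encard = (⋃ i ∈ t, s i).encard := by
  classical
  induction t using Finset.induction_on with
  | empty => simp
  | @insert a t ha ih =>
    have ihh := ih (fun i hi j hj hij =>
      hd i (Finset.mem_insert_of_mem hi) j (Finset.mem_insert_of_mem hj) hij)
    have hdisj : Disjoint (s a) (⋃ i ∈ t, s i) := by
      simp only [Set.disjoint_iUnion_right]
      intro i hi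
      exact hd a (Finset.mem_insert_self a t) i (Finset.mem_insert_of_mem hi)
        (fun h => ha (h ▸ hi))
    rw [Finset.sum_insert ha, Finset.set_biUnion_insert, Set.encard_union_eq hdisj, ihh]

lemma tsum_encard_le {ι α : Type*} (s : ι → Set α) (M : Set α)
    (hsub : ∀ i, s i ⊆ M) (hd : ∀ i j, i ≠ j → Disjoint (s i) (s j)) :
    ∑' i, (s i).encard ≤ M.encard := by
  rw [enat_tsum_eq]
  refine iSup_le fun t => ?_
  rw [encard_finset_biUnion t s (fun i _ j _ h => hd i j h)]
  exact Set.encard_le_encard (Set.iUnion₂_subset fun i _ => hsub i)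

lemma encard_iUnion_le' {ι α : Type*} (s : ι → Set α)
    (hd : ∀ i j, i ≠ j → Disjoint (s i) (s j)) :
    (⋃ i, s i).encard ≤ ∑' i, (s i).encard := by
  classical
  by_cases hI : {i | (s i).Nonempty}.Finite
  · have he : (⋃ i, s i) = ⋃ i ∈ hI.toFinset, s i := by
      ext x
      simp only [Set.mem_iUnion]
      constructor
      · rintro ⟨i, hi⟩
        exact ⟨i, hI.mem_toFinset.mpr ⟨x, hi⟩, hi⟩
      · rintro ⟨i, _, hi⟩
        exact ⟨i, hi⟩
    rw [he, ← encard_finset_biUnion _ _ (fun i _ j _ hij => hd i j hij)]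
    exact Summable.sum_le_tsum _ (fun i _ => zero_le) (enat_summable _)
  · have htop : ∑' i, (s i).encard = ⊤ := by
      rw [enat_tsum_eq, iSup_eq_top]
      intro b hb
      lift b to ℕ using hb.ne
      obtain ⟨t, hts, htc⟩ := Set.Infinite.exists_subset_card_eq hI (b + 1)
      refine ⟨t, ?_⟩
      have h1 : (b : ℕ∞) < (t.card : ℕ∞) := by
        rw [htc]; exact_mod_cast Nat.lt_succ_self b
      refine h1.trans_le ?_
      calc (t.card : ℕ∞) = ∑ _i ∈ t, 1 := by simp
        _ ≤ ∑ i ∈ t, (s i).encard := Finset.sum_le_sum fun i hi =>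
            Set.one_le_encard_iff_nonempty.mpr (hts (Finset.mem_coe.mpr hi))
    rw [htop]
    exact le_top

/-- **Proposition 4.1 (3).**  Let `f, g` be `(A,β)`-locally Hölder, `k ≥ 1`, and
for each `k`-cylinder choose a non-periodic point `z_p` in it.  With
`ε_k = A e^{−βk}/(1 − e^{−β})`, for every `n ≥ k` and every open rectangle
`U = (u₁,u₂) × (u₃,u₄)` one has `W(n, U_{−ε_k}) ≤ M(n, U) ≤ W(n, U_{+ε_k})`. -/
theorem stmt_14 {𝒜 : Type*} [Countable 𝒜] (T : 𝒜 → 𝒜 → Prop)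
    (f g : (ℕ → 𝒜) → ℝ) (A β : ℝ) (hA : 0 < A) (hβ : 0 < β)
    (hf : LocallyHolder T A β f) (hg : LocallyHolder T A β g)
    (k : ℕ) (hk : 1 ≤ k)
    (zp : (Fin k → 𝒜) → ℕ → 𝒜)
    (hzp : ∀ a : Fin k → 𝒜, (cylinder T k a).Nonempty →
      zp a ∈ cylinder T k a ∧ ∀ m : ℕ, 1 ≤ m → shiftMap^[m] (zp a) ≠ zp a)
    (n : ℕ) (hn : k ≤ n) (u₁ u₂ u₃ u₄ : ℝ) :
    countW T f g k zp n
        (u₁ + A * Real.exp (-β * k) / (1 - Real.exp (-β)))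
        (u₂ - A * Real.exp (-β * k) / (1 - Real.exp (-β)))
        (u₃ + A * Real.exp (-β * k) / (1 - Real.exp (-β)))
        (u₄ - A * Real.exp (-β * k) / (1 - Real.exp (-β))) ≤
      countM T f g n u₁ u₂ u₃ u₄ ∧
    countM T f g n u₁ u₂ u₃ u₄ ≤
      countW T f g k zp n
        (u₁ - A * Real.exp (-β * k) / (1 - Real.exp (-β)))
        (u₂ + A * Real.exp (-β * k) / (1 - Real.exp (-β)))
        (u₃ - A * Real.exp (-β * k) / (1 - Real.exp (-β)))
        (u₄ + A * Real.exp (-β * k) / (1 - Real.exp (-β))) := by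
  classical
  have hn1 : 1 ≤ n := hk.trans hn
  set ε : ℝ := A * Real.exp (-β * k) / (1 - Real.exp (-β)) with hεdef
  set M : Set (ℕ → 𝒜) := {x ∈ shiftSpace T | shiftMap^[n] x = x ∧
    ergSum f n x ∈ Set.Ioo u₁ u₂ ∧ ergSum g n x ∈ Set.Ioo u₃ u₄} with hMdef
  set Sm : (Fin k → 𝒜) → Set (ℕ → 𝒜) := fun a =>
    {y ∈ cylinder T k a | shiftMap^[n] y = zp a ∧
      ergSum f n y ∈ Set.Ioo (u₁ + ε) (u₂ - ε) ∧
      ergSum g n y ∈ Set.Ioo (u₃ + ε) (u₄ - ε)} with hSmdef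
  set Sp : (Fin k → 𝒜) → Set (ℕ → 𝒜) := fun a =>
    {y ∈ cylinder T k a | shiftMap^[n] y = zp a ∧
      ergSum f n y ∈ Set.Ioo (u₁ - ε) (u₂ + ε) ∧
      ergSum g n y ∈ Set.Ioo (u₃ - ε) (u₄ + ε)} with hSpdef
  set Ψ : (ℕ → 𝒜) → ℕ → 𝒜 := fun y j => y (j % n) with hΨdef
  have hk0 : 0 < k := hk
  -- ================= Part 1 : W⁻ ≤ M ====================
  have hΨmain : ∀ a : Fin k → 𝒜, ∀ y ∈ Sm a, Ψ y ∈ M := by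
    intro a y hy
    obtain ⟨⟨hys, hyc⟩, hyz, hyf, hyg⟩ := hy
    have hcyl : (cylinder T k a).Nonempty := ⟨y, hys, hyc⟩
    obtain ⟨⟨hzs, hzc⟩, -⟩ := hzp a hcyl
    have hyn : ∀ j, y (j + n) = zp a j := by
      intro j
      have h := congrFun hyz j
      rwa [shiftIter] at h
    -- agreement on the first n + k letters
    have hag : ∀ i < n + k, Ψ y i = y i := by
      intro i hi
      by_cases h : i < n
      · show y (i % n) = y i
        rw [Nat.mod_eq_of_lt h]
      · push_neg at h
        have hik : i - n < k := by omega
        have h1 : i % n = i - n := by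
          rw [Nat.mod_eq_sub_mod h, Nat.mod_eq_of_lt (by omega)]
        show y (i % n) = y i
        rw [h1]
        have h2 : y i = zp a (i - n) := by
          have h3 := hyn (i - n)
          rwa [show i - n + n = i by omega] at h3
        have h3 : zp a (i - n) = a ⟨i - n, hik⟩ := hzc ⟨i - n, hik⟩
        have h4 : y (i - n) = a ⟨i - n, hik⟩ := hyc ⟨i - n, hik⟩
        rw [h2, h3, ← h4]
    -- Ψ y is in the shift space
    have hΨs : Ψ y ∈ shiftSpace T := by
      intro m
      show T (y (m % n)) (Ψ y (m + 1))
      show T (y (m % n)) (y ((m + 1) % n))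
      have hstep : (m + 1) % n = (m % n + 1) % n := (Nat.mod_add_mod m n 1).symm
      have hmn : m % n < n := Nat.mod_lt _ (by omega)
      by_cases h : m % n + 1 = n
      · have h0 : (m + 1) % n = 0 := by rw [hstep, h, Nat.mod_self]
        rw [h0]
        have hy0 : y n = y 0 := by
          have h1 := hyn 0
          rw [zero_add] at h1
          have h2 : zp a 0 = a ⟨0, hk0⟩ := hzc ⟨0, hk0⟩
          have h3 : y 0 = a ⟨0, hk0⟩ := hyc ⟨0, hk0⟩
          rw [h1, h2, ← h3]
        have h4 := hys (m % n)
        rw [h, hy0] at h4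
        exact h4
      · have h0 : (m + 1) % n = m % n + 1 := by
          rw [hstep, Nat.mod_eq_of_lt (by omega)]
        rw [h0]
        exact hys (m % n)
    -- Ψ y is n-periodic
    have hΨper : shiftMap^[n] (Ψ y) = Ψ y := by
      funext j
      rw [shiftIter]
      show y ((j + n) % n) = y (j % n)
      rw [Nat.add_mod_right]
    -- ergodic sums
    have hbf := ergSum_bound hA hβ hf k n hk hΨs hys hag
    have hbg := ergSum_bound hA hβ hg k n hk hΨs hys hag
    obtain ⟨hbf1, hbf2⟩ := abs_le.mp hbf
    obtain ⟨hbg1, hbg2⟩ := abs_le.mp hbg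
    obtain ⟨hf1, hf2⟩ := hyf
    obtain ⟨hg1, hg2⟩ := hyg
    exact ⟨hΨs, hΨper, ⟨by linarith, by linarith⟩, ⟨by linarith, by linarith⟩⟩
  have hΨinj : ∀ a : Fin k → 𝒜, Set.InjOn Ψ (Sm a) := by
    intro a y hy y' hy' he
    obtain ⟨⟨hys, hyc⟩, hyz, -⟩ := hy
    obtain ⟨⟨hys', hyc'⟩, hyz', -⟩ := hy'
    funext j
    by_cases h : j < n
    · have h1 := congrFun he j
      show y j = y' j
      have h2 : y (j % n) = y' (j % n) := h1
      rwa [Nat.mod_eq_of_lt h] at h2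
    · push_neg at h
      have h1 := congrFun hyz (j - n)
      have h2 := congrFun hyz' (j - n)
      rw [shiftIter] at h1 h2
      rw [show j - n + n = j by omega] at h1 h2
      rw [h1, h2]
  have hΨdis : ∀ a b : Fin k → 𝒜, a ≠ b → Disjoint (Ψ '' Sm a) (Ψ '' Sm b) := by
    intro a b hab
    rw [Set.disjoint_left]
    rintro x ⟨y, hy, rfl⟩ ⟨y', hy', he⟩
    apply hab
    funext i
    have hik : (i : ℕ) < n := lt_of_lt_of_le i.2 hn
    have h1 : Ψ y i.1 = a i := by
      show y (i.1 % n) = a i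
      rw [Nat.mod_eq_of_lt hik]
      exact hy.1.2 i
    have h2 : Ψ y' i.1 = b i := by
      show y' (i.1 % n) = b i
      rw [Nat.mod_eq_of_lt hik]
      exact hy'.1.2 i
    rw [← h1, ← h2, he]
  have part1 : (∑' a : Fin k → 𝒜, (Sm a).encard) ≤ M.encard := by
    have he : ∀ a : Fin k → 𝒜, (Sm a).encard = (Ψ '' Sm a).encard :=
      fun a => ((hΨinj a).encard_image).symm
    calc (∑' a : Fin k → 𝒜, (Sm a).encard)
        = ∑' a : Fin k → 𝒜, (Ψ '' Sm a).encard := tsum_congr he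
      _ ≤ M.encard := tsum_encard_le _ _
          (fun a => by
            rintro x ⟨y, hy, rfl⟩
            exact hΨmain a y hy) hΨdis
  -- ================= Part 2 : M ≤ W⁺ ====================
  set Ma : (Fin k → 𝒜) → Set (ℕ → 𝒜) := fun a => {x ∈ M | ∀ i : Fin k, x i.1 = a i}
    with hMadef
  set Φ : (Fin k → 𝒜) → (ℕ → 𝒜) → ℕ → 𝒜 :=
    fun a x j => if j < n then x j else zp a (j - n) with hΦdef
  have hΦmain : ∀ a : Fin k → 𝒜, ∀ x ∈ Ma a, Φ a x ∈ Sp a := by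
    intro a x hx
    obtain ⟨⟨hxs, hxp, hxf, hxg⟩, hxa⟩ := hx
    have hper : ∀ j, x (j + n) = x j := by
      intro j
      have h := congrFun hxp j
      rwa [shiftIter] at h
    have hcyl : (cylinder T k a).Nonempty := ⟨x, hxs, hxa⟩
    obtain ⟨⟨hzs, hzc⟩, -⟩ := hzp a hcyl
    have hag : ∀ i < n + k, Φ a x i = x i := by
      intro i hi
      by_cases h : i < n
      · show (if i < n then x i else zp a (i - n)) = x i
        rw [if_pos h]
      · push_neg at h
        show (if i < n then x i else zp a (i - n)) = x i
        rw [if_neg (by omega)]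
        have hik : i - n < k := by omega
        have h2 : x i = x (i - n) := by
          have h3 := hper (i - n)
          rwa [show i - n + n = i by omega] at h3
        have h4 : x (i - n) = a ⟨i - n, hik⟩ := hxa ⟨i - n, hik⟩
        have h5 : zp a (i - n) = a ⟨i - n, hik⟩ := hzc ⟨i - n, hik⟩
        rw [h2, h4, h5]
    have hΦs : Φ a x ∈ shiftSpace T := by
      intro m
      show T (if m < n then x m else zp a (m - n))
        (if m + 1 < n then x (m + 1) else zp a (m + 1 - n))
      by_cases h1 : m + 1 < n
      · rw [if_pos (by omega), if_pos h1]
        exact hxs m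
      · by_cases h2 : m + 1 = n
        · rw [if_pos (by omega), if_neg (by omega), show m + 1 - n = 0 by omega]
          have ha0 : zp a 0 = a ⟨0, hk0⟩ := hzc ⟨0, hk0⟩
          have hb0 : x 0 = a ⟨0, hk0⟩ := hxa ⟨0, hk0⟩
          have hc0 : x (m + 1) = x 0 := by
            rw [h2]
            have h3 := hper 0
            rwa [zero_add] at h3
          rw [ha0, ← hb0, ← hc0]
          exact hxs m
        · rw [if_neg (by omega), if_neg (by omega), show m + 1 - n = m - n + 1 by omega]
          exact hzs (m - n)
    have hΦp : shiftMap^[n] (Φ a x) = zp a := by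
      funext j
      rw [shiftIter]
      show (if j + n < n then x (j + n) else zp a (j + n - n)) = zp a j
      rw [if_neg (by omega), show j + n - n = j by omega]
    have hΦc : ∀ i : Fin k, Φ a x i.1 = a i := by
      intro i
      show (if i.1 < n then x i.1 else zp a (i.1 - n)) = a i
      rw [if_pos (lt_of_lt_of_le i.2 hn)]
      exact hxa i
    have hbf := ergSum_bound hA hβ hf k n hk hxs hΦs (fun i hi => (hag i hi).symm)
    have hbg := ergSum_bound hA hβ hg k n hk hxs hΦs (fun i hi => (hag i hi).symm)
    obtain ⟨hbf1, hbf2⟩ := abs_le.mp hbf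
    obtain ⟨hbg1, hbg2⟩ := abs_le.mp hbg
    obtain ⟨hf1, hf2⟩ := hxf
    obtain ⟨hg1, hg2⟩ := hxg
    exact ⟨⟨hΦs, hΦc⟩, hΦp, ⟨by linarith, by linarith⟩, ⟨by linarith, by linarith⟩⟩
  have hΦinj : ∀ a : Fin k → 𝒜, Set.InjOn (Φ a) (Ma a) := by
    intro a x hx x' hx' he
    obtain ⟨⟨hxs, hxp, -⟩, -⟩ := hx
    obtain ⟨⟨hxs', hxp', -⟩, -⟩ := hx'
    have hper : ∀ j, x (j + n) = x j := by
      intro j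
      have h := congrFun hxp j
      rwa [shiftIter] at h
    have hper' : ∀ j, x' (j + n) = x' j := by
      intro j
      have h := congrFun hxp' j
      rwa [shiftIter] at h
    funext j
    have key : ∀ m, m < n → x m = x' m := by
      intro m hm
      have h := congrFun he m
      show x m = x' m
      have h1 : (if m < n then x m else zp a (m - n)) =
          (if m < n then x' m else zp a (m - n)) := h
      rwa [if_pos hm, if_pos hm] at h1
    calc x j = x (j % n) := periodic_mod hn1 hper j
      _ = x' (j % n) := key _ (Nat.mod_lt _ (by omega))
      _ = x' j := (periodic_mod hn1 hper' j).symm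
  have part2 : M.encard ≤ ∑' a : Fin k → 𝒜, (Sp a).encard := by
    have hsub : M ⊆ ⋃ a : Fin k → 𝒜, Ma a := by
      intro x hx
      exact Set.mem_iUnion.mpr ⟨fun i => x i.1, hx, fun i => rfl⟩
    have hdis : ∀ a b : Fin k → 𝒜, a ≠ b → Disjoint (Ma a) (Ma b) := by
      intro a b hab
      rw [Set.disjoint_left]
      intro x hxa hxb
      exact hab (funext fun i => (hxa.2 i).symm.trans (hxb.2 i))
    calc M.encard ≤ (⋃ a : Fin k → 𝒜, Ma a).encard := Set.encard_le_encard hsub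
      _ ≤ ∑' a : Fin k → 𝒜, (Ma a).encard := encard_iUnion_le' _ hdis
      _ ≤ ∑' a : Fin k → 𝒜, (Sp a).encard := by
          refine Summable.tsum_le_tsum (fun a => ?_) (enat_summable _) (enat_summable _)
          calc (Ma a).encard = ((Φ a) '' Ma a).encard := ((hΦinj a).encard_image).symm
            _ ≤ (Sp a).encard := Set.encard_le_encard (by
                rintro y ⟨x, hx, rfl⟩
                exact hΦmain a x hx)
  exact ⟨part1, part2⟩
end
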